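/- Let α > n, θ < 0, κ < 0, s₁ > 0, s₂ > 0, and let (u, v) be a pair of positive Lebesgue measurable solutions of the system u(y) = ∫_{ℝ^n_+} v^κ(x) |x−y|^{α−n} |x−x^o|^{−s₂} dx for y ∈ ∂ℝ^n_+ and v(x) = ∫_{∂ℝ^n_+} u^θ(y) |x−y|^{α−n} |y−x^o|^{−s₁} dy for x ∈ ℝ^n_+, satisfying that u(y)|y−x^o|^{−s₁′} ∈ L^{θ+1}(∂ℝ^n_+) and v(x)|x−x^o|^{−s₂′} ∈ L^{t′}(ℝ^n_+) for the associated exponents s₁′, s₂′, t′ arising from 0 < p < 2(n−1)/(n+α−2), 0 < t < 2n/(n+α) with θ = 1/(p−1), κ = t′−1, s₁ = n+α−2−(n−α)/(p−1), s₂ = (α−n)t′+2n. Then: (I) ∫_{∂ℝ^n_+} (1+|y|^{α−n}) u^θ(y) |y−x^o|^{−s₁} dy < ∞ and ∫_{ℝ^n_+} (1+|x|^{α−n}) v^κ(x) |x−x^o|^{−s₂} dx < ∞; (II) the limits a := lim_{|y|→∞} |y|^{n−α} u(y) = ∫_{ℝ^n_+} v^κ(x)|x−x^o|^{−s₂} dx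 and b := lim_{|x|→∞} |x|^{n−α} v(x) = ∫_{∂ℝ^n_+} u^θ(y)|y−x^o|^{−s₁} dy exist, are finite, and are positive; (III) there exist constants C₁, C₂ > 0 such that (1+|y|^{α−n})/C₁ ≤ u(y) ≤ C₁(1+|y|^{α−n}) for all y ∈ ∂ℝ^n_+ and (1+|x|^{α−n})/C₂ ≤ v(x) ≤ C₂(1+|x|^{α−n}) for all x ∈ ℝ^n_+. -/

import Mathlib

noncomputable section

open MeasureTheory Metric ENNReal

/-- `ℝ^n` with the Euclidean norm. -/
abbrev Eu (n : ℕ) : Type := EuclideanSpace ℝ (Fin n)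

/-- The last coordinate `x_n` of a point `x ∈ ℝ^n`. -/
def lastCoord (n : ℕ) (x : Eu n) : ℝ :=
  if h : 0 < n then x ⟨n - 1, Nat.sub_lt h Nat.one_pos⟩ else 0

/-- The first coordinate `x_1` of a point `x ∈ ℝ^n`. -/
def firstCoord (n : ℕ) (x : Eu n) : ℝ :=
  if h : 0 < n then x ⟨0, h⟩ else 0

/-- The open upper half space `ℝ^n_+ = {x : x_n > 0}`. -/
def upperHalf (n : ℕ) : Set (Eu n) := {x | 0 < lastCoord n x}

/-- The identification of `ℝ^{n-1}` with the boundary `∂ℝ^n_+ = {x : x_n = 0}`. -/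
def emb (n : ℕ) (y : Eu (n - 1)) : Eu n :=
  (EuclideanSpace.equiv (Fin n) ℝ).symm fun i =>
    if h : (i : ℕ) < n - 1 then y ⟨i, h⟩ else 0

/-- The point `z^o = (0,…,0,-1) ∈ ℝ^n`. -/
def zo (n : ℕ) : Eu n :=
  (EuclideanSpace.equiv (Fin n) ℝ).symm fun i => if (i : ℕ) = n - 1 then -1 else 0

/-- The point `x^o = (0,…,0,-2) ∈ ℝ^n`. -/
def xo (n : ℕ) : Eu n :=
  (EuclideanSpace.equiv (Fin n) ℝ).symm fun i => if (i : ℕ) = n - 1 then -2 else 0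

/-- The surface measure on the sphere `∂B^n = {x : |x - z^o| = 1}`. -/
def surf (n : ℕ) : Measure (Eu n) :=
  Measure.map (fun p : sphere (0 : Eu n) 1 => zo n + (p : Eu n))
    (volume : Measure (Eu n)).toSphere

/-- Lebesgue measure restricted to the open unit ball `B^n` centered at `z^o`. -/
def ballM (n : ℕ) : Measure (Eu n) := (volume : Measure (Eu n)).restrict (ball (zo n) 1)

/-- `ω_n`, the volume of the unit ball in `ℝ^n`. -/
def unitBallVol (n : ℕ) : ℝ := ((volume : Measure (Eu n)) (ball (0 : Eu n) 1)).toReal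

/-- `(∫ F^r)^{1/r}` (in `ℝ≥0∞`) of a nonnegative function `F`, for an arbitrary
nonzero real exponent `r`. -/
def eLp {X : Type*} [MeasurableSpace X] (μ : Measure X) (f : X → ℝ) (r : ℝ) : ℝ≥0∞ :=
  (∫⁻ x, ENNReal.ofReal (f x) ^ r ∂μ) ^ (1 / r)

/-- `(∫ F^r)^{1/r}` (in `ℝ≥0∞`) of an `ℝ≥0∞`-valued function `F`. -/
def eLpE {X : Type*} [MeasurableSpace X] (μ : Measure X) (F : X → ℝ≥0∞) (r : ℝ) : ℝ≥0∞ :=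
  (∫⁻ x, F x ^ r ∂μ) ^ (1 / r)

/-- The real `L^r`-norm `(∫ |f|^r)^{1/r}`. -/
def rLp {X : Type*} [MeasurableSpace X] (μ : Measure X) (f : X → ℝ) (r : ℝ) : ℝ :=
  (∫ x, |f x| ^ r ∂μ) ^ (1 / r)

/-- The sharp constant `C_{e1}(n,α)`. -/
def Ce1 (n : ℕ) (α : ℝ) : ℝ :=
  ((n : ℝ) * unitBallVol n) ^ (-(((n : ℝ) + α - 2) / (2 * ((n : ℝ) - 1)))) *
    (∫ ξ in ball (zo n) 1,
        (∫ ζ, ‖ξ - ζ‖ ^ (α - (n : ℝ)) ∂surf n) ^ (2 * (n : ℝ) / ((n : ℝ) - α))) ^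
      (((n : ℝ) - α) / (2 * (n : ℝ)))

/-- The sharp constant `C_{e2}(n,α)`. -/
def Ce2 (n : ℕ) (α : ℝ) : ℝ :=
  ((n : ℝ) * unitBallVol n) ^ (-(((n : ℝ) + α - 4) / (2 * ((n : ℝ) - 1)))) *
    (∫ ξ in ball (zo n) 1,
        (∫ ζ, (1 - ‖ξ - zo n‖ ^ 2) * ‖ξ - ζ‖ ^ (-((n : ℝ) - α + 2)) ∂surf n) ^
          (2 * (n : ℝ) / ((n : ℝ) - α))) ^ (((n : ℝ) - α) / (2 * (n : ℝ)))

-- coordinate lemmas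
lemma emb_apply (m : ℕ) (y : Eu m) (i : Fin (m+1)) :
    emb (m+1) y i = if h : (i : ℕ) < m then y ⟨i, h⟩ else 0 := rfl

lemma zo_apply (m : ℕ) (i : Fin (m+1)) : zo (m+1) i = if (i : ℕ) = m then -1 else 0 := rfl

lemma xo_apply (m : ℕ) (i : Fin (m+1)) : xo (m+1) i = if (i : ℕ) = m then -2 else 0 := rfl

lemma lastCoord_apply (m : ℕ) (x : Eu (m+1)) : lastCoord (m+1) x = x (Fin.last m) := by
  simp [lastCoord, Fin.last]

lemma lastCoord_sub (m : ℕ) (x y : Eu (m+1)) :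
    lastCoord (m+1) (x - y) = lastCoord (m+1) x - lastCoord (m+1) y := by
  simp [lastCoord_apply, PiLp.sub_apply]

lemma lastCoord_neg (m : ℕ) (x : Eu (m+1)) :
    lastCoord (m+1) (-x) = - lastCoord (m+1) x := by
  simp [lastCoord_apply, PiLp.neg_apply]

lemma abs_lastCoord_le (m : ℕ) (x : Eu (m+1)) : |lastCoord (m+1) x| ≤ ‖x‖ := by
  rw [lastCoord_apply, EuclideanSpace.norm_eq]
  rw [← Real.sqrt_sq_eq_abs]
  apply Real.sqrt_le_sqrt
  have := Finset.single_le_sum (f := fun i => ‖x i‖ ^ 2)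
    (fun i _ => sq_nonneg _) (Finset.mem_univ (Fin.last m))
  simpa [sq_abs] using this

lemma norm_emb (m : ℕ) (y : Eu m) : ‖emb (m+1) y‖ = ‖y‖ := by
  rw [EuclideanSpace.norm_eq, EuclideanSpace.norm_eq]
  congr 1
  rw [Fin.sum_univ_castSucc]
  simp only [emb_apply]
  have h1 : ∀ j : Fin m, ((Fin.castSucc j : Fin (m+1)) : ℕ) < m := fun j => j.isLt
  rw [Finset.sum_congr rfl (fun j _ => by rw [dif_pos (h1 j)])]
  simp [Fin.last]

lemma lastCoord_emb (m : ℕ) (y : Eu m) : lastCoord (m+1) (emb (m+1) y) = 0 := by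
  rw [lastCoord_apply, emb_apply]
  simp

lemma lastCoord_zo (m : ℕ) : lastCoord (m+1) (zo (m+1)) = -1 := by
  rw [lastCoord_apply, zo_apply]; simp

lemma lastCoord_xo (m : ℕ) : lastCoord (m+1) (xo (m+1)) = -2 := by
  rw [lastCoord_apply, xo_apply]; simp

lemma norm_zo (m : ℕ) : ‖zo (m+1)‖ = 1 := by
  rw [EuclideanSpace.norm_eq]
  rw [Fin.sum_univ_castSucc]
  have : ∀ j : Fin m, zo (m+1) (Fin.castSucc j) = 0 := by
    intro j; rw [zo_apply, if_neg]; exact Nat.ne_of_lt j.isLt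
  rw [Finset.sum_congr rfl (fun j _ => by rw [this j])]
  have : zo (m+1) (Fin.last m) = -1 := by rw [zo_apply]; simp [Fin.last]
  simp [this]

lemma norm_xo (m : ℕ) : ‖xo (m+1)‖ = 2 := by
  rw [EuclideanSpace.norm_eq]
  rw [Fin.sum_univ_castSucc]
  have h : ∀ j : Fin m, xo (m+1) (Fin.castSucc j) = 0 := by
    intro j; rw [xo_apply, if_neg]; exact Nat.ne_of_lt j.isLt
  rw [Finset.sum_congr rfl (fun j _ => by rw [h j])]
  have : xo (m+1) (Fin.last m) = -2 := by rw [xo_apply]; simp [Fin.last]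
  rw [this]
  simp only [norm_zero, ne_eq, OfNat.ofNat_ne_zero, not_false_eq_true, zero_pow,
    Finset.sum_const_zero, zero_add, norm_neg]
  rw [show ‖(2:ℝ)‖ ^ 2 = 2 ^ 2 by norm_num]
  exact Real.sqrt_sq (by norm_num)

lemma continuous_emb (m : ℕ) : Continuous (emb (m+1)) := by
  have : Continuous fun (y : Eu m) (i : Fin (m+1)) =>
      if h : (i : ℕ) < m then y ⟨i, h⟩ else 0 := by
    apply continuous_pi
    intro i
    by_cases h : (i : ℕ) < m
    · simp only [dif_pos h]; exact (EuclideanSpace.proj (𝕜 := ℝ) (⟨i, h⟩ : Fin m)).continuous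
    · simp only [dif_neg h]; exact continuous_const
  exact (EuclideanSpace.equiv (Fin (m+1)) ℝ).symm.continuous.comp this

lemma continuous_lastCoord (m : ℕ) : Continuous (lastCoord (m+1)) := by
  simp only [funext (lastCoord_apply m)]
  exact (continuous_apply (Fin.last m)).comp (EuclideanSpace.equiv (Fin (m+1)) ℝ).continuous

lemma isOpen_upperHalf (m : ℕ) : IsOpen (upperHalf (m+1)) :=
  isOpen_lt continuous_const (continuous_lastCoord m)

lemma measurableSet_upperHalf (m : ℕ) : MeasurableSet (upperHalf (m+1)) :=
  (isOpen_upperHalf m).measurableSet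

-- derived bounds
section bounds
variable {m : ℕ}

lemma emb_xo_ge_two (y : Eu m) : 2 ≤ ‖emb (m+1) y - xo (m+1)‖ := by
  have h := abs_lastCoord_le m (emb (m+1) y - xo (m+1))
  rw [lastCoord_sub, lastCoord_emb, lastCoord_xo] at h
  simpa using h.trans' (by norm_num)

lemma emb_xo_lower (y : Eu m) : (1 + ‖y‖) / 4 ≤ ‖emb (m+1) y - xo (m+1)‖ := by
  have h1 := emb_xo_ge_two y
  have h2 : ‖y‖ - 2 ≤ ‖emb (m+1) y - xo (m+1)‖ := by
    have := norm_sub_norm_le (emb (m+1) y) (xo (m+1))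
    rw [norm_emb, norm_xo] at this
    linarith
  rcases le_total ‖y‖ 7 with h | h
  · linarith
  · linarith

lemma emb_xo_upper (y : Eu m) : ‖emb (m+1) y - xo (m+1)‖ ≤ 2 * (1 + ‖y‖) := by
  have := norm_sub_le (emb (m+1) y) (xo (m+1))
  rw [norm_emb, norm_xo] at this
  linarith [norm_nonneg y]

lemma x_xo_ge_two {x : Eu (m+1)} (hx : x ∈ upperHalf (m+1)) : 2 ≤ ‖x - xo (m+1)‖ := by
  have h := abs_lastCoord_le m (x - xo (m+1))
  rw [lastCoord_sub, lastCoord_xo] at h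
  have hx' : 0 < lastCoord (m+1) x := hx
  calc (2:ℝ) ≤ |lastCoord (m+1) x - -2| := by rw [abs_of_pos (by linarith)]; linarith
  _ ≤ _ := h

lemma x_xo_lower {x : Eu (m+1)} (hx : x ∈ upperHalf (m+1)) :
    (1 + ‖x‖) / 4 ≤ ‖x - xo (m+1)‖ := by
  have h1 := x_xo_ge_two hx
  have h2 : ‖x‖ - 2 ≤ ‖x - xo (m+1)‖ := by
    have := norm_sub_norm_le x (xo (m+1))
    rw [norm_xo] at this; linarith
  rcases le_total ‖x‖ 7 with h | h
  · linarith
  · linarith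

lemma x_xo_upper (x : Eu (m+1)) : ‖x - xo (m+1)‖ ≤ 2 * (1 + ‖x‖) := by
  have := norm_sub_le x (xo (m+1))
  rw [norm_xo] at this; linarith [norm_nonneg x]

lemma x_emb_ge_lastCoord (x : Eu (m+1)) (y : Eu m) :
    lastCoord (m+1) x ≤ ‖x - emb (m+1) y‖ := by
  have h := abs_lastCoord_le m (x - emb (m+1) y)
  rw [lastCoord_sub, lastCoord_emb, sub_zero] at h
  exact (le_abs_self _).trans h

lemma x_emb_ge (x : Eu (m+1)) (y : Eu m) : ‖y‖ - ‖x‖ ≤ ‖x - emb (m+1) y‖ := by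
  have := norm_sub_norm_le (emb (m+1) y) x
  rw [norm_emb, ← norm_neg (emb (m+1) y - x), neg_sub] at this
  linarith [le_abs_self (‖emb (m+1) y‖ - ‖x‖)]

lemma x_emb_ge' (x : Eu (m+1)) (y : Eu m) : ‖x‖ - ‖y‖ ≤ ‖x - emb (m+1) y‖ := by
  have := norm_sub_norm_le x (emb (m+1) y)
  rw [norm_emb] at this
  linarith [le_abs_self (‖x‖ - ‖y‖)]

lemma x_emb_upper (x : Eu (m+1)) (y : Eu m) :
    ‖x - emb (m+1) y‖ ≤ (1 + ‖x‖) * (1 + ‖y‖) := by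
  have := norm_sub_le x (emb (m+1) y)
  rw [norm_emb] at this
  nlinarith [norm_nonneg x, norm_nonneg y]

lemma ball_mem_facts {x : Eu (m+1)} (hx : x ∈ ball (-zo (m+1)) (2⁻¹ : ℝ)) :
    2⁻¹ ≤ lastCoord (m+1) x ∧ ‖x‖ ≤ 2 := by
  have hd : ‖x - -zo (m+1)‖ < 2⁻¹ := mem_ball_iff_norm.mp hx
  have h1 : |lastCoord (m+1) (x - -zo (m+1))| ≤ ‖x - -zo (m+1)‖ := abs_lastCoord_le _ _
  rw [lastCoord_sub, lastCoord_neg, lastCoord_zo] at h1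
  constructor
  · have := abs_le.mp (h1.trans hd.le)
    simp only [neg_neg] at this
    linarith [this.1]
  · have h2 : ‖x‖ - ‖-zo (m+1)‖ ≤ ‖x - -zo (m+1)‖ := by
      linarith [le_abs_self (‖x‖ - ‖-zo (m+1)‖), norm_sub_norm_le x (-zo (m+1))]
    rw [norm_neg, norm_zo] at h2
    linarith

lemma ball_subset_upperHalf : ball (-zo (m+1)) (2⁻¹ : ℝ) ⊆ upperHalf (m+1) := by
  intro x hx
  have := (ball_mem_facts hx).1
  show 0 < lastCoord (m+1) x
  linarith

lemma ball_kernel_lower {x : Eu (m+1)} (hx : x ∈ ball (-zo (m+1)) (2⁻¹ : ℝ)) (y : Eu m) :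
    (1 + ‖y‖) / 8 ≤ ‖x - emb (m+1) y‖ := by
  obtain ⟨h1, h2⟩ := ball_mem_facts hx
  have ha := x_emb_ge_lastCoord x y
  have hb := x_emb_ge x y
  rcases le_total ‖y‖ 3 with h | h
  · linarith
  · linarith

end bounds

-- analytic helpers
lemma one_add_rpow_le' {a β : ℝ} (ha : 0 ≤ a) (hβ : 0 ≤ β) :
    1 + a ^ β ≤ 2 * (1 + a) ^ β := by
  have h1 : (1:ℝ) ≤ (1 + a) ^ β := Real.one_le_rpow (by linarith) hβ
  have h2 : a ^ β ≤ (1 + a) ^ β := Real.rpow_le_rpow ha (by linarith) hβ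
  linarith

lemma rpow_one_add_le' {a β : ℝ} (ha : 0 ≤ a) (hβ : 0 ≤ β) :
    (1 + a) ^ β ≤ 2 ^ β * (1 + a ^ β) := by
  rcases le_total a 1 with h | h
  · have h1 : (1 + a) ^ β ≤ 2 ^ β := Real.rpow_le_rpow (by linarith) (by linarith) hβ
    have h2 : (2:ℝ) ^ β * 1 ≤ 2 ^ β * (1 + a ^ β) := by
      have : (0:ℝ) ≤ a ^ β := Real.rpow_nonneg ha β
      nlinarith [Real.rpow_nonneg (show (0:ℝ) ≤ 2 by norm_num) β]
    linarith
  · have h1 : (1 + a) ^ β ≤ (2 * a) ^ β := Real.rpow_le_rpow (by linarith) (by linarith) hβ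
    rw [Real.mul_rpow (by norm_num) (by linarith)] at h1
    have h2 : (2:ℝ) ^ β * a ^ β ≤ 2 ^ β * (1 + a ^ β) := by
      have : (0:ℝ) ≤ (2:ℝ) ^ β := Real.rpow_nonneg (by norm_num) β
      nlinarith
    linarith

lemma lintegral_one_add_norm_ne_top (k : ℕ) {r : ℝ} (hr : (k : ℝ) < r) :
    (∫⁻ x : Eu k, ENNReal.ofReal ((1 + ‖x‖) ^ (-r))) ≠ ⊤ := by
  have hi : Integrable (fun x : Eu k => (1 + ‖x‖) ^ (-r)) :=
    integrable_one_add_norm (by simpa using hr)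
  exact hi.lintegral_lt_top.ne

lemma lint_ofReal_const_mul {X : Type*} [MeasurableSpace X] (μ : Measure X) {c : ℝ}
    (hc : 0 ≤ c) (f : X → ℝ) :
    ∫⁻ x, ENNReal.ofReal (c * f x) ∂μ = ENNReal.ofReal c * ∫⁻ x, ENNReal.ofReal (f x) ∂μ := by
  simp_rw [ENNReal.ofReal_mul hc]
  exact lintegral_const_mul' _ _ ENNReal.ofReal_ne_top


set_option maxHeartbeats 2000000 in
/-- Lemma 2.6, integrability and asymptotics of positive
solutions of the integral system on the upper half space. -/
theorem system_integrability_and_asymptotics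
    (n : ℕ) (hn : 2 ≤ n) (α : ℝ) (hα : (n : ℝ) < α)
    (p t t' θ κ s₁ s₂ s₁' s₂' : ℝ)
    (hp0 : 0 < p) (hp : p < 2 * ((n : ℝ) - 1) / ((n : ℝ) + α - 2))
    (ht0 : 0 < t) (ht : t < 2 * (n : ℝ) / ((n : ℝ) + α))
    (ht' : t' = t / (t - 1))
    (hθ : θ = 1 / (p - 1)) (hκ : κ = t' - 1)
    (hs₁ : s₁ = (n : ℝ) + α - 2 - ((n : ℝ) - α) / (p - 1))
    (hs₂ : s₂ = (α - (n : ℝ)) * t' + 2 * (n : ℝ))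
    (hs₁' : s₁' = (n : ℝ) + α - 2 - 2 * ((n : ℝ) - 1) / p)
    (hs₂' : s₂' = (n : ℝ) + α - 2 * (n : ℝ) / t)
    (u : Eu (n - 1) → ℝ) (v : Eu n → ℝ)
    (hum : Measurable u) (hvm : Measurable v)
    (hu0 : ∀ y, 0 < u y) (hv0 : ∀ x ∈ upperHalf n, 0 < v x)
    (hu : ∀ y, ENNReal.ofReal (u y) =
      ∫⁻ x in upperHalf n,
        ENNReal.ofReal (v x ^ κ * ‖x - emb n y‖ ^ (α - (n : ℝ)) * ‖x - xo n‖ ^ (-s₂)))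
    (hv : ∀ x ∈ upperHalf n, ENNReal.ofReal (v x) =
      ∫⁻ y, ENNReal.ofReal (u y ^ θ * ‖x - emb n y‖ ^ (α - (n : ℝ)) * ‖emb n y - xo n‖ ^ (-s₁)))
    (huL : (∫⁻ y, ENNReal.ofReal ((u y * ‖emb n y - xo n‖ ^ (-s₁')) ^ (θ + 1))) ≠ ⊤)
    (hvL : (∫⁻ x in upperHalf n, ENNReal.ofReal ((v x * ‖x - xo n‖ ^ (-s₂')) ^ t')) ≠ ⊤)
    :
    ((∫⁻ y, ENNReal.ofReal
          ((1 + ‖y‖ ^ (α - (n : ℝ))) * u y ^ θ * ‖emb n y - xo n‖ ^ (-s₁))) ≠ ⊤ ∧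
      (∫⁻ x in upperHalf n, ENNReal.ofReal
          ((1 + ‖x‖ ^ (α - (n : ℝ))) * v x ^ κ * ‖x - xo n‖ ^ (-s₂))) ≠ ⊤) ∧
    (0 < (∫⁻ x in upperHalf n, ENNReal.ofReal (v x ^ κ * ‖x - xo n‖ ^ (-s₂))) ∧
      (∫⁻ x in upperHalf n, ENNReal.ofReal (v x ^ κ * ‖x - xo n‖ ^ (-s₂))) ≠ ⊤ ∧
      Filter.Tendsto (fun y : Eu (n - 1) => ‖y‖ ^ ((n : ℝ) - α) * u y)
        (Filter.cocompact (Eu (n - 1)))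
        (nhds (∫⁻ x in upperHalf n, ENNReal.ofReal (v x ^ κ * ‖x - xo n‖ ^ (-s₂))).toReal)) ∧
    (0 < (∫⁻ y, ENNReal.ofReal (u y ^ θ * ‖emb n y - xo n‖ ^ (-s₁))) ∧
      (∫⁻ y, ENNReal.ofReal (u y ^ θ * ‖emb n y - xo n‖ ^ (-s₁))) ≠ ⊤ ∧
      Filter.Tendsto (fun x : Eu n => ‖x‖ ^ ((n : ℝ) - α) * v x)
        (Filter.cocompact (Eu n) ⊓ Filter.principal (upperHalf n))
        (nhds (∫⁻ y, ENNReal.ofReal (u y ^ θ * ‖emb n y - xo n‖ ^ (-s₁))).toReal)) ∧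
    (∃ C₁ : ℝ, 0 < C₁ ∧ ∀ y : Eu (n - 1),
      (1 + ‖y‖ ^ (α - (n : ℝ))) / C₁ ≤ u y ∧ u y ≤ C₁ * (1 + ‖y‖ ^ (α - (n : ℝ)))) ∧
    (∃ C₂ : ℝ, 0 < C₂ ∧ ∀ x ∈ upperHalf n,
      (1 + ‖x‖ ^ (α - (n : ℝ))) / C₂ ≤ v x ∧ v x ≤ C₂ * (1 + ‖x‖ ^ (α - (n : ℝ)))) := by
  obtain ⟨m, rfl⟩ : ∃ m, n = m + 1 := ⟨n - 1, by omega⟩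
  have hm : 1 ≤ m := by omega
  have hm0 : 0 < m := hm
  have hm1 : (1:ℝ) ≤ (m:ℝ) := by exact_mod_cast hm
  have hN : ((m+1:ℕ):ℝ) = (m:ℝ) + 1 := by push_cast; ring
  set β := α - ((m+1:ℕ):ℝ) with hβdef
  have hβpos : 0 < β := by simp only [hβdef]; linarith
  have hβnn : 0 ≤ β := hβpos.le
  have hN2 : (2:ℝ) ≤ ((m+1:ℕ):ℝ) := by rw [hN]; linarith
  have hα2 : 2 < α := lt_of_le_of_lt hN2 hα
  -- arithmetic on exponents
  have hden1 : 0 < ((m+1:ℕ):ℝ) + α - 2 := by linarith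
  have hple : p * (((m+1:ℕ):ℝ) + α - 2) < 2 * (((m+1:ℕ):ℝ) - 1) := by
    exact (lt_div_iff₀ hden1).mp hp
  have hp1 : p < 1 := by nlinarith
  have hpd : p - 1 < 0 := by linarith
  have hθeq : θ * (p - 1) = 1 := by rw [hθ]; exact one_div_mul_cancel (by linarith)
  have hθneg : θ < 0 := by nlinarith
  have hθ1neg : θ + 1 < 0 := by nlinarith
  have htden : 0 < ((m+1:ℕ):ℝ) + α := by linarith
  have htle : t * (((m+1:ℕ):ℝ) + α) < 2 * ((m+1:ℕ):ℝ) := by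
    exact (lt_div_iff₀ htden).mp ht
  have ht1 : t < 1 := by nlinarith
  have htd : t - 1 < 0 := by linarith
  have ht'eq : t' * (t - 1) = t := by rw [ht']; exact div_mul_cancel₀ t (by linarith)
  have ht'neg : t' < 0 := by nlinarith
  have hκ1 : κ + 1 = t' := by rw [hκ]; ring
  have hκneg : κ < 0 := by linarith
  have hs₁eq : s₁ = ((m+1:ℕ):ℝ) + α - 2 + β * θ := by
    rw [hs₁, hθ, hβdef]; ring
  have hs₂eq : s₂ = β * t' + 2 * ((m+1:ℕ):ℝ) := hs₂
  have hs₁pos : 0 < s₁ := by nlinarith [hθeq, hple, hs₁eq]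
  have hs₂pos : 0 < s₂ := by nlinarith [ht'eq, htle, hs₂eq]
  have E1 : β * θ + β - s₁ = -(2 * (m:ℝ)) := by
    rw [hs₁eq, hβdef, hN]; ring
  have E3 : β * θ - s₁ = -(((m:ℝ)) + α - 1) := by
    rw [hs₁eq, hN]; ring
  have E2 : β * κ + β - s₂ = -(2 * ((m:ℝ) + 1)) := by
    rw [hs₂eq, ← hκ1, hN]; ring
  have E4 : β * κ - s₂ = -(((m:ℝ) + 1) + α) := by
    rw [hs₂eq, ← hκ1, hβdef, hN]; ring
  -- basic sets and measurability
  have MU : MeasurableSet (upperHalf (m+1)) := measurableSet_upperHalf m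
  set A₀ : Set (Eu (m+1)) := ball (-zo (m+1)) (2⁻¹ : ℝ) with hA₀def
  have MA₀ : MeasurableSet A₀ := measurableSet_ball
  have hA₀U : A₀ ⊆ upperHalf (m+1) := ball_subset_upperHalf
  have hMnorm : ∀ z : Eu (m+1), Measurable fun x : Eu (m+1) => ‖x - z‖ :=
    fun z => (continuous_id.sub continuous_const).norm.measurable
  have hMw₂ : Measurable fun x : Eu (m+1) => ‖x - xo (m+1)‖ ^ (-s₂) :=
    (hMnorm _).pow measurable_const
  have hMvκ : Measurable fun x => v x ^ κ := hvm.pow measurable_const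
  have hMg₂ : Measurable fun x => ENNReal.ofReal (v x ^ κ * ‖x - xo (m+1)‖ ^ (-s₂)) :=
    ENNReal.measurable_ofReal.comp (hMvκ.mul hMw₂)
  have hMK : ∀ y : Eu m, Measurable fun x : Eu (m+1) =>
      ENNReal.ofReal (v x ^ κ * ‖x - emb (m+1) y‖ ^ β * ‖x - xo (m+1)‖ ^ (-s₂)) :=
    fun y => ENNReal.measurable_ofReal.comp
      ((hMvκ.mul ((hMnorm _).pow measurable_const)).mul hMw₂)
  have hMuθ : Measurable fun y : Eu m => u y ^ θ := hum.pow measurable_const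
  have hMw₁ : Measurable fun y : Eu m => ‖emb (m+1) y - xo (m+1)‖ ^ (-s₁) :=
    (((continuous_emb m).sub continuous_const).norm.measurable).pow measurable_const
  have hMg₁ : Measurable fun y : Eu m =>
      ENNReal.ofReal (u y ^ θ * ‖emb (m+1) y - xo (m+1)‖ ^ (-s₁)) :=
    ENNReal.measurable_ofReal.comp (hMuθ.mul hMw₁)
  have hMKy : ∀ x : Eu (m+1), Measurable fun y : Eu m =>
      ENNReal.ofReal (u y ^ θ * ‖x - emb (m+1) y‖ ^ β * ‖emb (m+1) y - xo (m+1)‖ ^ (-s₁)) :=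
    fun x => ENNReal.measurable_ofReal.comp
      ((hMuθ.mul (((continuous_const.sub (continuous_emb m)).norm.measurable).pow
        measurable_const)).mul hMw₁)
  -- pointwise positivity
  have hw₁pos : ∀ y : Eu m, 0 < ‖emb (m+1) y - xo (m+1)‖ ^ (-s₁) :=
    fun y => Real.rpow_pos_of_pos (by linarith [emb_xo_ge_two (m := m) y]) _
  have hg₁pos : ∀ y : Eu m, 0 < u y ^ θ * ‖emb (m+1) y - xo (m+1)‖ ^ (-s₁) :=
    fun y => mul_pos (Real.rpow_pos_of_pos (hu0 y) θ) (hw₁pos y)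
  have hg₂posU : ∀ x ∈ upperHalf (m+1), 0 < v x ^ κ * ‖x - xo (m+1)‖ ^ (-s₂) := by
    intro x hx
    exact mul_pos (Real.rpow_pos_of_pos (hv0 x hx) κ)
      (Real.rpow_pos_of_pos (by linarith [x_xo_ge_two hx]) _)
  -- the seed integral mA
  set mA : ℝ≥0∞ := ∫⁻ x in A₀, ENNReal.ofReal (v x ^ κ * ‖x - xo (m+1)‖ ^ (-s₂)) with hmAdef
  have hmApos : 0 < mA := by
    rw [hmAdef, lintegral_pos_iff_support hMg₂]
    have hsub : A₀ ⊆ Function.support fun x => ENNReal.ofReal (v x ^ κ * ‖x - xo (m+1)‖ ^ (-s₂)) :=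
      fun x hx => (ENNReal.ofReal_pos.mpr (hg₂posU x (hA₀U hx))).ne'
    have hba : (0:ℝ≥0∞) < volume A₀ := by
      rw [hA₀def]; exact measure_ball_pos _ _ (by norm_num)
    calc (0:ℝ≥0∞) < volume A₀ := hba
    _ = (volume.restrict A₀) A₀ := by rw [Measure.restrict_apply_self]
    _ ≤ _ := measure_mono hsub
  have hmAne : mA ≠ ⊤ := by
    have key : ∀ x ∈ A₀, v x ^ κ * ‖x - xo (m+1)‖ ^ (-s₂) ≤
        2 ^ β * (v x ^ κ * ‖x - emb (m+1) (0 : Eu m)‖ ^ β * ‖x - xo (m+1)‖ ^ (-s₂)) := by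
      intro x hx
      have h1 : (2:ℝ)⁻¹ ≤ ‖x - emb (m+1) (0 : Eu m)‖ :=
        le_trans (ball_mem_facts hx).1 (x_emb_ge_lastCoord x 0)
      have h2 : ((2:ℝ)⁻¹) ^ β ≤ ‖x - emb (m+1) (0:Eu m)‖ ^ β :=
        Real.rpow_le_rpow (by norm_num) h1 hβnn
      have h3 : (1:ℝ) ≤ 2 ^ β * ‖x - emb (m+1) (0:Eu m)‖ ^ β := by
        have h4 := mul_le_mul_of_nonneg_left h2 (Real.rpow_nonneg (by norm_num : (0:ℝ) ≤ 2) β)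
        calc (1:ℝ) = 2 ^ β * (2⁻¹:ℝ) ^ β := by
              rw [← Real.mul_rpow (by norm_num) (by norm_num)]; norm_num
        _ ≤ _ := h4
      have hac : 0 ≤ v x ^ κ * ‖x - xo (m+1)‖ ^ (-s₂) := (hg₂posU x (hA₀U hx)).le
      calc v x ^ κ * ‖x - xo (m+1)‖ ^ (-s₂)
          = 1 * (v x ^ κ * ‖x - xo (m+1)‖ ^ (-s₂)) := (one_mul _).symm
      _ ≤ (2 ^ β * ‖x - emb (m+1) (0:Eu m)‖ ^ β) * (v x ^ κ * ‖x - xo (m+1)‖ ^ (-s₂)) :=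
            mul_le_mul_of_nonneg_right h3 hac
      _ = _ := by ring
    have h1 : mA ≤ ENNReal.ofReal (2 ^ β) * ∫⁻ x in A₀,
        ENNReal.ofReal (v x ^ κ * ‖x - emb (m+1) (0:Eu m)‖ ^ β * ‖x - xo (m+1)‖ ^ (-s₂)) := by
      rw [hmAdef, ← lint_ofReal_const_mul _ (Real.rpow_nonneg (by norm_num : (0:ℝ) ≤ 2) β)]
      exact setLIntegral_mono' MA₀ fun x hx => ENNReal.ofReal_le_ofReal (key x hx)
    have h2 : (∫⁻ x in A₀,
        ENNReal.ofReal (v x ^ κ * ‖x - emb (m+1) (0:Eu m)‖ ^ β * ‖x - xo (m+1)‖ ^ (-s₂)))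
        ≤ ENNReal.ofReal (u 0) := by
      rw [hu 0]; exact lintegral_mono_set hA₀U
    exact ne_top_of_le_ne_top (ENNReal.mul_ne_top ENNReal.ofReal_ne_top ENNReal.ofReal_ne_top)
      (h1.trans (mul_le_mul_right h2 _))
  -- lower bound for u
  have hulow : ∀ y : Eu m, mA.toReal * ((1 + ‖y‖) / 8) ^ β ≤ u y := by
    intro y
    have hy8 : (0:ℝ) < (1 + ‖y‖) / 8 := by positivity
    have key : ∀ x ∈ A₀, ((1 + ‖y‖) / 8) ^ β * (v x ^ κ * ‖x - xo (m+1)‖ ^ (-s₂)) ≤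
        v x ^ κ * ‖x - emb (m+1) y‖ ^ β * ‖x - xo (m+1)‖ ^ (-s₂) := by
      intro x hx
      have h2 : ((1 + ‖y‖) / 8) ^ β ≤ ‖x - emb (m+1) y‖ ^ β :=
        Real.rpow_le_rpow hy8.le (ball_kernel_lower hx y) hβnn
      have hac := (hg₂posU x (hA₀U hx)).le
      calc ((1 + ‖y‖) / 8) ^ β * (v x ^ κ * ‖x - xo (m+1)‖ ^ (-s₂))
          ≤ ‖x - emb (m+1) y‖ ^ β * (v x ^ κ * ‖x - xo (m+1)‖ ^ (-s₂)) :=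
            mul_le_mul_of_nonneg_right h2 hac
      _ = _ := by ring
    have h1 : ENNReal.ofReal (((1 + ‖y‖) / 8) ^ β) * mA ≤ ENNReal.ofReal (u y) := by
      rw [hu y, hmAdef, ← lint_ofReal_const_mul _ (Real.rpow_nonneg hy8.le β)]
      calc ∫⁻ x in A₀, ENNReal.ofReal (((1 + ‖y‖) / 8) ^ β * (v x ^ κ * ‖x - xo (m+1)‖ ^ (-s₂)))
          ≤ ∫⁻ x in A₀,
              ENNReal.ofReal (v x ^ κ * ‖x - emb (m+1) y‖ ^ β * ‖x - xo (m+1)‖ ^ (-s₂)) :=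
            setLIntegral_mono' MA₀ fun x hx => ENNReal.ofReal_le_ofReal (key x hx)
      _ ≤ _ := lintegral_mono_set hA₀U
    rw [← ENNReal.ofReal_toReal hmAne, ← ENNReal.ofReal_mul (Real.rpow_nonneg hy8.le β)] at h1
    have h5 := (ENNReal.ofReal_le_ofReal_iff (hu0 y).le).mp h1
    linarith [h5]
  have hmAtoRpos : 0 < mA.toReal := ENNReal.toReal_pos hmApos.ne' hmAne
  set cl : ℝ := mA.toReal / 8 ^ β with hcldef
  have hclpos : 0 < cl := div_pos hmAtoRpos (Real.rpow_pos_of_pos (by norm_num) β)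
  have hulow' : ∀ y : Eu m, cl * (1 + ‖y‖) ^ β ≤ u y := by
    intro y
    have heq : mA.toReal * ((1 + ‖y‖) / 8) ^ β = cl * (1 + ‖y‖) ^ β := by
      rw [hcldef, Real.div_rpow (by positivity) (by norm_num)]; ring
    have := hulow y; rw [heq] at this; exact this
  have huθle : ∀ y : Eu m, u y ^ θ ≤ cl ^ θ * (1 + ‖y‖) ^ (β * θ) := by
    intro y
    have h1pos : (0:ℝ) < 1 + ‖y‖ := by positivity
    have h2 := Real.rpow_le_rpow_of_nonpos
      (mul_pos hclpos (Real.rpow_pos_of_pos h1pos β)) (hulow' y) hθneg.le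
    rwa [Real.mul_rpow hclpos.le (Real.rpow_nonneg h1pos.le β),
      ← Real.rpow_mul h1pos.le] at h2
  -- generic finiteness on the boundary side
  have hIgen : ∀ e r : ℝ, 0 ≤ e → (m:ℝ) < r → β * θ + e - s₁ = -r →
      (∫⁻ y : Eu m,
        ENNReal.ofReal (u y ^ θ * (1 + ‖y‖) ^ e * ‖emb (m+1) y - xo (m+1)‖ ^ (-s₁))) ≠ ⊤ := by
    intro e r he hr hid
    have key : ∀ y : Eu m, u y ^ θ * (1 + ‖y‖) ^ e * ‖emb (m+1) y - xo (m+1)‖ ^ (-s₁) ≤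
        (cl ^ θ * 4 ^ s₁) * (1 + ‖y‖) ^ (-r) := by
      intro y
      have h1pos : (0:ℝ) < 1 + ‖y‖ := by positivity
      have hw : ‖emb (m+1) y - xo (m+1)‖ ^ (-s₁) ≤ ((1 + ‖y‖) / 4) ^ (-s₁) :=
        Real.rpow_le_rpow_of_nonpos (by positivity) (emb_xo_lower y) (by linarith)
      have hw2 : ((1 + ‖y‖) / 4) ^ (-s₁) = 4 ^ s₁ * (1 + ‖y‖) ^ (-s₁) := by
        rw [Real.div_rpow h1pos.le (by norm_num),
          Real.rpow_neg (by norm_num : (0:ℝ) ≤ 4), div_eq_mul_inv, inv_inv]; ring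
      calc u y ^ θ * (1 + ‖y‖) ^ e * ‖emb (m+1) y - xo (m+1)‖ ^ (-s₁)
          ≤ (cl ^ θ * (1 + ‖y‖) ^ (β * θ)) * (1 + ‖y‖) ^ e * (4 ^ s₁ * (1 + ‖y‖) ^ (-s₁)) := by
            rw [← hw2]
            apply mul_le_mul (mul_le_mul (huθle y) le_rfl (Real.rpow_nonneg h1pos.le e)
              (mul_nonneg (Real.rpow_nonneg hclpos.le θ) (Real.rpow_nonneg h1pos.le _))) hw
              (hw₁pos y).le
              (mul_nonneg (mul_nonneg (Real.rpow_nonneg hclpos.le θ)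
                (Real.rpow_nonneg h1pos.le _)) (Real.rpow_nonneg h1pos.le e))
      _ = (cl ^ θ * 4 ^ s₁) * (1 + ‖y‖) ^ (β * θ + e + -s₁) := by
            rw [show β * θ + e + -s₁ = β * θ + e + -s₁ from rfl, Real.rpow_add h1pos,
              Real.rpow_add h1pos]; ring
      _ = (cl ^ θ * 4 ^ s₁) * (1 + ‖y‖) ^ (-r) := by
            rw [show β * θ + e + -s₁ = -r by linarith [hid]]
    have h1 : (∫⁻ y : Eu m,
        ENNReal.ofReal (u y ^ θ * (1 + ‖y‖) ^ e * ‖emb (m+1) y - xo (m+1)‖ ^ (-s₁)))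
        ≤ ENNReal.ofReal (cl ^ θ * 4 ^ s₁) * ∫⁻ y : Eu m, ENNReal.ofReal ((1 + ‖y‖) ^ (-r)) := by
      rw [← lint_ofReal_const_mul _ (mul_nonneg (Real.rpow_nonneg hclpos.le θ)
        (Real.rpow_nonneg (by norm_num : (0:ℝ) ≤ 4) s₁))]
      exact lintegral_mono fun y => ENNReal.ofReal_le_ofReal (key y)
    exact ne_top_of_le_ne_top (ENNReal.mul_ne_top ENNReal.ofReal_ne_top
      (lintegral_one_add_norm_ne_top m hr)) h1
  have hBne : (∫⁻ y : Eu m,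
      ENNReal.ofReal (u y ^ θ * ‖emb (m+1) y - xo (m+1)‖ ^ (-s₁))) ≠ ⊤ := by
    have h := hIgen 0 ((m:ℝ) + α - 1) le_rfl (by linarith) (by linarith [E3])
    simpa [Real.rpow_zero] using h
  have hI₁' : (∫⁻ y : Eu m,
      ENNReal.ofReal (u y ^ θ * (1 + ‖y‖) ^ β * ‖emb (m+1) y - xo (m+1)‖ ^ (-s₁))) ≠ ⊤ :=
    hIgen β (2*(m:ℝ)) hβnn (by linarith) (by linarith [E1])
  -- positivity of restricted boundary integrals
  have hmBpos : ∀ (z : Eu m) (ρ : ℝ), 0 < ρ →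
      0 < ∫⁻ y in ball z ρ,
        ENNReal.ofReal (u y ^ θ * ‖emb (m+1) y - xo (m+1)‖ ^ (-s₁)) := by
    intro z ρ hρ
    rw [lintegral_pos_iff_support hMg₁]
    have hsub : ball z ρ ⊆ Function.support fun y : Eu m =>
        ENNReal.ofReal (u y ^ θ * ‖emb (m+1) y - xo (m+1)‖ ^ (-s₁)) :=
      fun y _ => (ENNReal.ofReal_pos.mpr (hg₁pos y)).ne'
    calc (0:ℝ≥0∞) < volume (ball z ρ) := measure_ball_pos _ _ hρ
    _ = (volume.restrict (ball z ρ)) (ball z ρ) := by rw [Measure.restrict_apply_self]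
    _ ≤ _ := measure_mono hsub
  have hmBne : ∀ z : Eu m, ∀ ρ : ℝ,
      (∫⁻ y in ball z ρ,
        ENNReal.ofReal (u y ^ θ * ‖emb (m+1) y - xo (m+1)‖ ^ (-s₁))) ≠ ⊤ :=
    fun z ρ => ne_top_of_le_ne_top hBne (setLIntegral_le_lintegral _ _)
  -- generic lower bound for v from a region with kernel bound
  have hvlow_case : ∀ x ∈ upperHalf (m+1), ∀ z : Eu m, ∀ ρ : ℝ, ∀ c : ℝ, 0 < c →
      (∀ y ∈ ball z ρ, c ≤ ‖x - emb (m+1) y‖) →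
      (∫⁻ y in ball z ρ,
        ENNReal.ofReal (u y ^ θ * ‖emb (m+1) y - xo (m+1)‖ ^ (-s₁))).toReal * c ^ β ≤ v x := by
    intro x hx z ρ c hc hker
    have hSne := hmBne z ρ
    have key : ∀ y ∈ ball z ρ,
        c ^ β * (u y ^ θ * ‖emb (m+1) y - xo (m+1)‖ ^ (-s₁)) ≤
        u y ^ θ * ‖x - emb (m+1) y‖ ^ β * ‖emb (m+1) y - xo (m+1)‖ ^ (-s₁) := by
      intro y hy
      have h2 : c ^ β ≤ ‖x - emb (m+1) y‖ ^ β := Real.rpow_le_rpow hc.le (hker y hy) hβnn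
      calc c ^ β * (u y ^ θ * ‖emb (m+1) y - xo (m+1)‖ ^ (-s₁))
          ≤ ‖x - emb (m+1) y‖ ^ β * (u y ^ θ * ‖emb (m+1) y - xo (m+1)‖ ^ (-s₁)) :=
            mul_le_mul_of_nonneg_right h2 (hg₁pos y).le
      _ = _ := by ring
    have h1 : ENNReal.ofReal (c ^ β) * (∫⁻ y in ball z ρ,
        ENNReal.ofReal (u y ^ θ * ‖emb (m+1) y - xo (m+1)‖ ^ (-s₁))) ≤ ENNReal.ofReal (v x) := by
      rw [hv x hx, ← lint_ofReal_const_mul _ (Real.rpow_nonneg hc.le β)]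
      calc ∫⁻ y in ball z ρ,
            ENNReal.ofReal (c ^ β * (u y ^ θ * ‖emb (m+1) y - xo (m+1)‖ ^ (-s₁)))
          ≤ ∫⁻ y in ball z ρ, ENNReal.ofReal
              (u y ^ θ * ‖x - emb (m+1) y‖ ^ β * ‖emb (m+1) y - xo (m+1)‖ ^ (-s₁)) :=
            setLIntegral_mono' measurableSet_ball fun y hy =>
              ENNReal.ofReal_le_ofReal (key y hy)
      _ ≤ _ := setLIntegral_le_lintegral _ _
    rw [← ENNReal.ofReal_toReal hSne, ← ENNReal.ofReal_mul (Real.rpow_nonneg hc.le β)] at h1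
    have h5 := (ENNReal.ofReal_le_ofReal_iff (hv0 x hx).le).mp h1
    linarith
  set y₅ : Eu m := EuclideanSpace.single (⟨0, hm0⟩ : Fin m) (5:ℝ) with hy₅def
  have hy₅norm : ‖y₅‖ = 5 := by
    rw [hy₅def, EuclideanSpace.norm_single]; norm_num
  have hr₁pos : 0 < (∫⁻ y in ball (0:Eu m) 1,
      ENNReal.ofReal (u y ^ θ * ‖emb (m+1) y - xo (m+1)‖ ^ (-s₁))).toReal :=
    ENNReal.toReal_pos (hmBpos 0 1 one_pos).ne' (hmBne 0 1)
  have hr₂pos : 0 < (∫⁻ y in ball y₅ 1,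
      ENNReal.ofReal (u y ^ θ * ‖emb (m+1) y - xo (m+1)‖ ^ (-s₁))).toReal :=
    ENNReal.toReal_pos (hmBpos y₅ 1 one_pos).ne' (hmBne y₅ 1)
  set cv : ℝ := min
    ((∫⁻ y in ball (0:Eu m) 1,
      ENNReal.ofReal (u y ^ θ * ‖emb (m+1) y - xo (m+1)‖ ^ (-s₁))).toReal / 2 ^ β)
    ((∫⁻ y in ball y₅ 1,
      ENNReal.ofReal (u y ^ θ * ‖emb (m+1) y - xo (m+1)‖ ^ (-s₁))).toReal / 4 ^ β) with hcvdef
  have hcvpos : 0 < cv := lt_min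
    (div_pos hr₁pos (Real.rpow_pos_of_pos (by norm_num) β))
    (div_pos hr₂pos (Real.rpow_pos_of_pos (by norm_num) β))
  have hvlow : ∀ x ∈ upperHalf (m+1), cv * (1 + ‖x‖) ^ β ≤ v x := by
    intro x hx
    have hXpos : (0:ℝ) < 1 + ‖x‖ := by positivity
    rcases le_total ‖x‖ 3 with hx3 | hx3
    · have hker : ∀ y ∈ ball y₅ 1, (1 + ‖x‖)/4 ≤ ‖x - emb (m+1) y‖ := by
        intro y hy
        have hd : ‖y - y₅‖ < 1 := mem_ball_iff_norm.mp hy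
        have habs := abs_norm_sub_norm_le y y₅
        have h4 : 4 ≤ ‖y‖ := by
          rw [hy₅norm] at habs
          rcases abs_le.mp (habs.trans hd.le) with ⟨hl, _⟩
          linarith
        have := x_emb_ge x y
        linarith
      have h1 := hvlow_case x hx y₅ 1 ((1 + ‖x‖)/4) (by positivity) hker
      have heq : (∫⁻ y in ball y₅ 1,
          ENNReal.ofReal (u y ^ θ * ‖emb (m+1) y - xo (m+1)‖ ^ (-s₁))).toReal *
          ((1 + ‖x‖)/4) ^ β =
          ((∫⁻ y in ball y₅ 1,
          ENNReal.ofReal (u y ^ θ * ‖emb (m+1) y - xo (m+1)‖ ^ (-s₁))).toReal / 4 ^ β) *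
          (1 + ‖x‖) ^ β := by
        rw [Real.div_rpow hXpos.le (by norm_num)]; ring
      rw [heq] at h1
      have hle : cv ≤ (∫⁻ y in ball y₅ 1,
          ENNReal.ofReal (u y ^ θ * ‖emb (m+1) y - xo (m+1)‖ ^ (-s₁))).toReal / 4 ^ β :=
        min_le_right _ _
      exact le_trans (mul_le_mul_of_nonneg_right hle (Real.rpow_nonneg hXpos.le β)) h1
    · have hker : ∀ y ∈ ball (0:Eu m) 1, (1 + ‖x‖)/2 ≤ ‖x - emb (m+1) y‖ := by
        intro y hy
        have h1 : ‖y‖ < 1 := mem_ball_zero_iff.mp hy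
        have := x_emb_ge' x y
        linarith
      have h1 := hvlow_case x hx 0 1 ((1 + ‖x‖)/2) (by positivity) hker
      have heq : (∫⁻ y in ball (0:Eu m) 1,
          ENNReal.ofReal (u y ^ θ * ‖emb (m+1) y - xo (m+1)‖ ^ (-s₁))).toReal *
          ((1 + ‖x‖)/2) ^ β =
          ((∫⁻ y in ball (0:Eu m) 1,
          ENNReal.ofReal (u y ^ θ * ‖emb (m+1) y - xo (m+1)‖ ^ (-s₁))).toReal / 2 ^ β) *
          (1 + ‖x‖) ^ β := by
        rw [Real.div_rpow hXpos.le (by norm_num)]; ring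
      rw [heq] at h1
      have hle : cv ≤ (∫⁻ y in ball (0:Eu m) 1,
          ENNReal.ofReal (u y ^ θ * ‖emb (m+1) y - xo (m+1)‖ ^ (-s₁))).toReal / 2 ^ β :=
        min_le_left _ _
      exact le_trans (mul_le_mul_of_nonneg_right hle (Real.rpow_nonneg hXpos.le β)) h1
  have hvκle : ∀ x ∈ upperHalf (m+1), v x ^ κ ≤ cv ^ κ * (1 + ‖x‖) ^ (β * κ) := by
    intro x hx
    have hXpos : (0:ℝ) < 1 + ‖x‖ := by positivity
    have h2 := Real.rpow_le_rpow_of_nonpos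
      (mul_pos hcvpos (Real.rpow_pos_of_pos hXpos β)) (hvlow x hx) hκneg.le
    rwa [Real.mul_rpow hcvpos.le (Real.rpow_nonneg hXpos.le β),
      ← Real.rpow_mul hXpos.le] at h2
  -- generic finiteness on the half-space side
  have hJgen : ∀ e r : ℝ, 0 ≤ e → (m:ℝ) + 1 < r → β * κ + e - s₂ = -r →
      (∫⁻ x in upperHalf (m+1),
        ENNReal.ofReal (v x ^ κ * (1 + ‖x‖) ^ e * ‖x - xo (m+1)‖ ^ (-s₂))) ≠ ⊤ := by
    intro e r he hr hid
    have key : ∀ x ∈ upperHalf (m+1),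
        v x ^ κ * (1 + ‖x‖) ^ e * ‖x - xo (m+1)‖ ^ (-s₂) ≤
        (cv ^ κ * 4 ^ s₂) * (1 + ‖x‖) ^ (-r) := by
      intro x hx
      have hXpos : (0:ℝ) < 1 + ‖x‖ := by positivity
      have hw : ‖x - xo (m+1)‖ ^ (-s₂) ≤ ((1 + ‖x‖) / 4) ^ (-s₂) :=
        Real.rpow_le_rpow_of_nonpos (by positivity) (x_xo_lower hx) (by linarith)
      have hw2 : ((1 + ‖x‖) / 4) ^ (-s₂) = 4 ^ s₂ * (1 + ‖x‖) ^ (-s₂) := by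
        rw [Real.div_rpow hXpos.le (by norm_num),
          Real.rpow_neg (by norm_num : (0:ℝ) ≤ 4), div_eq_mul_inv, inv_inv]; ring
      have hwpos : (0:ℝ) < ‖x - xo (m+1)‖ ^ (-s₂) :=
        Real.rpow_pos_of_pos (by linarith [x_xo_ge_two hx]) _
      calc v x ^ κ * (1 + ‖x‖) ^ e * ‖x - xo (m+1)‖ ^ (-s₂)
          ≤ (cv ^ κ * (1 + ‖x‖) ^ (β * κ)) * (1 + ‖x‖) ^ e * (4 ^ s₂ * (1 + ‖x‖) ^ (-s₂)) := by
            rw [← hw2]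
            apply mul_le_mul (mul_le_mul (hvκle x hx) le_rfl (Real.rpow_nonneg hXpos.le e)
              (mul_nonneg (Real.rpow_nonneg hcvpos.le κ) (Real.rpow_nonneg hXpos.le _))) hw
              hwpos.le
              (mul_nonneg (mul_nonneg (Real.rpow_nonneg hcvpos.le κ)
                (Real.rpow_nonneg hXpos.le _)) (Real.rpow_nonneg hXpos.le e))
      _ = (cv ^ κ * 4 ^ s₂) * (1 + ‖x‖) ^ (β * κ + e + -s₂) := by
            rw [Real.rpow_add hXpos, Real.rpow_add hXpos]; ring
      _ = (cv ^ κ * 4 ^ s₂) * (1 + ‖x‖) ^ (-r) := by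
            rw [show β * κ + e + -s₂ = -r by linarith [hid]]
    have h1 : (∫⁻ x in upperHalf (m+1),
        ENNReal.ofReal (v x ^ κ * (1 + ‖x‖) ^ e * ‖x - xo (m+1)‖ ^ (-s₂)))
        ≤ ENNReal.ofReal (cv ^ κ * 4 ^ s₂) *
          ∫⁻ x : Eu (m+1), ENNReal.ofReal ((1 + ‖x‖) ^ (-r)) := by
      have hc : (0:ℝ) ≤ cv ^ κ * 4 ^ s₂ := mul_nonneg (Real.rpow_nonneg hcvpos.le κ)
        (Real.rpow_nonneg (by norm_num) s₂)
      calc (∫⁻ x in upperHalf (m+1),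
            ENNReal.ofReal (v x ^ κ * (1 + ‖x‖) ^ e * ‖x - xo (m+1)‖ ^ (-s₂)))
          ≤ ∫⁻ x in upperHalf (m+1),
              ENNReal.ofReal ((cv ^ κ * 4 ^ s₂) * (1 + ‖x‖) ^ (-r)) :=
            setLIntegral_mono' MU fun x hx => ENNReal.ofReal_le_ofReal (key x hx)
      _ ≤ ∫⁻ x : Eu (m+1), ENNReal.ofReal ((cv ^ κ * 4 ^ s₂) * (1 + ‖x‖) ^ (-r)) :=
            setLIntegral_le_lintegral _ _
      _ = _ := lint_ofReal_const_mul _ hc _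
    refine ne_top_of_le_ne_top (ENNReal.mul_ne_top ENNReal.ofReal_ne_top
      (lintegral_one_add_norm_ne_top (m+1) ?_)) h1
    rw [hN]; exact hr
  have hAne : (∫⁻ x in upperHalf (m+1),
      ENNReal.ofReal (v x ^ κ * ‖x - xo (m+1)‖ ^ (-s₂))) ≠ ⊤ := by
    have h := hJgen 0 ((m:ℝ) + 1 + α) le_rfl (by linarith) (by linarith [E4])
    simpa [Real.rpow_zero] using h
  have hI₂' : (∫⁻ x in upperHalf (m+1),
      ENNReal.ofReal (v x ^ κ * (1 + ‖x‖) ^ β * ‖x - xo (m+1)‖ ^ (-s₂))) ≠ ⊤ :=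
    hJgen β (2*((m:ℝ)+1)) hβnn (by linarith) (by linarith [E2])
  have hApos : 0 < ∫⁻ x in upperHalf (m+1),
      ENNReal.ofReal (v x ^ κ * ‖x - xo (m+1)‖ ^ (-s₂)) :=
    lt_of_lt_of_le hmApos (lintegral_mono_set hA₀U)
  have hBpos : 0 < ∫⁻ y : Eu m,
      ENNReal.ofReal (u y ^ θ * ‖emb (m+1) y - xo (m+1)‖ ^ (-s₁)) :=
    lt_of_lt_of_le (hmBpos 0 1 one_pos) (setLIntegral_le_lintegral _ _)
  -- upper bounds
  have hvup : ∀ x ∈ upperHalf (m+1), v x ≤ (∫⁻ y : Eu m,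
      ENNReal.ofReal (u y ^ θ * (1 + ‖y‖) ^ β * ‖emb (m+1) y - xo (m+1)‖ ^ (-s₁))).toReal *
      (1 + ‖x‖) ^ β := by
    intro x hx
    have hXpos : (0:ℝ) < 1 + ‖x‖ := by positivity
    have key : ∀ y : Eu m,
        u y ^ θ * ‖x - emb (m+1) y‖ ^ β * ‖emb (m+1) y - xo (m+1)‖ ^ (-s₁) ≤
        (1 + ‖x‖) ^ β * (u y ^ θ * (1 + ‖y‖) ^ β * ‖emb (m+1) y - xo (m+1)‖ ^ (-s₁)) := by
      intro y
      have hYpos : (0:ℝ) < 1 + ‖y‖ := by positivity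
      have hK : ‖x - emb (m+1) y‖ ^ β ≤ (1 + ‖x‖) ^ β * (1 + ‖y‖) ^ β := by
        rw [← Real.mul_rpow hXpos.le hYpos.le]
        exact Real.rpow_le_rpow (norm_nonneg _) (x_emb_upper x y) hβnn
      calc u y ^ θ * ‖x - emb (m+1) y‖ ^ β * ‖emb (m+1) y - xo (m+1)‖ ^ (-s₁)
          ≤ u y ^ θ * ((1 + ‖x‖) ^ β * (1 + ‖y‖) ^ β) * ‖emb (m+1) y - xo (m+1)‖ ^ (-s₁) :=
            mul_le_mul_of_nonneg_right (mul_le_mul_of_nonneg_left hK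
              (Real.rpow_pos_of_pos (hu0 y) θ).le) (hw₁pos y).le
      _ = _ := by ring
    have h1 : ENNReal.ofReal (v x) ≤ ENNReal.ofReal ((1 + ‖x‖) ^ β) * ∫⁻ y : Eu m,
        ENNReal.ofReal (u y ^ θ * (1 + ‖y‖) ^ β * ‖emb (m+1) y - xo (m+1)‖ ^ (-s₁)) := by
      rw [hv x hx, ← lint_ofReal_const_mul _ (Real.rpow_nonneg hXpos.le β)]
      exact lintegral_mono fun y => ENNReal.ofReal_le_ofReal (key y)
    rw [← ENNReal.ofReal_toReal hI₁', ← ENNReal.ofReal_mul (Real.rpow_nonneg hXpos.le β)] at h1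
    have h5 := (ENNReal.ofReal_le_ofReal_iff (mul_nonneg (Real.rpow_nonneg hXpos.le β)
      ENNReal.toReal_nonneg)).mp h1
    linarith
  have huup : ∀ y : Eu m, u y ≤ (∫⁻ x in upperHalf (m+1),
      ENNReal.ofReal (v x ^ κ * (1 + ‖x‖) ^ β * ‖x - xo (m+1)‖ ^ (-s₂))).toReal *
      (1 + ‖y‖) ^ β := by
    intro y
    have hYpos : (0:ℝ) < 1 + ‖y‖ := by positivity
    have key : ∀ x ∈ upperHalf (m+1),
        v x ^ κ * ‖x - emb (m+1) y‖ ^ β * ‖x - xo (m+1)‖ ^ (-s₂) ≤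
        (1 + ‖y‖) ^ β * (v x ^ κ * (1 + ‖x‖) ^ β * ‖x - xo (m+1)‖ ^ (-s₂)) := by
      intro x hx
      have hXpos : (0:ℝ) < 1 + ‖x‖ := by positivity
      have hK : ‖x - emb (m+1) y‖ ^ β ≤ (1 + ‖x‖) ^ β * (1 + ‖y‖) ^ β := by
        rw [← Real.mul_rpow hXpos.le hYpos.le]
        exact Real.rpow_le_rpow (norm_nonneg _) (x_emb_upper x y) hβnn
      have hwpos : (0:ℝ) < ‖x - xo (m+1)‖ ^ (-s₂) :=
        Real.rpow_pos_of_pos (by linarith [x_xo_ge_two hx]) _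
      calc v x ^ κ * ‖x - emb (m+1) y‖ ^ β * ‖x - xo (m+1)‖ ^ (-s₂)
          ≤ v x ^ κ * ((1 + ‖x‖) ^ β * (1 + ‖y‖) ^ β) * ‖x - xo (m+1)‖ ^ (-s₂) :=
            mul_le_mul_of_nonneg_right (mul_le_mul_of_nonneg_left hK
              (Real.rpow_pos_of_pos (hv0 x hx) κ).le) hwpos.le
      _ = _ := by ring
    have h1 : ENNReal.ofReal (u y) ≤ ENNReal.ofReal ((1 + ‖y‖) ^ β) *
        ∫⁻ x in upperHalf (m+1),
        ENNReal.ofReal (v x ^ κ * (1 + ‖x‖) ^ β * ‖x - xo (m+1)‖ ^ (-s₂)) := by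
      rw [hu y, ← lint_ofReal_const_mul _ (Real.rpow_nonneg hYpos.le β)]
      exact setLIntegral_mono' MU fun x hx => ENNReal.ofReal_le_ofReal (key x hx)
    rw [← ENNReal.ofReal_toReal hI₂', ← ENNReal.ofReal_mul (Real.rpow_nonneg hYpos.le β)] at h1
    have h5 := (ENNReal.ofReal_le_ofReal_iff (mul_nonneg (Real.rpow_nonneg hYpos.le β)
      ENNReal.toReal_nonneg)).mp h1
    linarith
  -- countably generated filters
  have hCG : (Filter.cocompact (Eu m)).IsCountablyGenerated := by
    rw [← comap_dist_left_atTop_eq_cocompact (0 : Eu m)]; infer_instance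
  have hCG' : (Filter.cocompact (Eu (m+1))).IsCountablyGenerated := by
    rw [← comap_dist_left_atTop_eq_cocompact (0 : Eu (m+1))]; infer_instance
  have hCG2 : ((Filter.cocompact (Eu (m+1))) ⊓
      Filter.principal (upperHalf (m+1))).IsCountablyGenerated := by infer_instance
  refine ⟨⟨?_, ?_⟩, ⟨hApos, hAne, ?_⟩, ⟨hBpos, hBne, ?_⟩, ?_, ?_⟩
  · -- (I) boundary integral
    have key : ∀ y : Eu m,
        (1 + ‖y‖ ^ β) * u y ^ θ * ‖emb (m+1) y - xo (m+1)‖ ^ (-s₁) ≤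
        2 * (u y ^ θ * (1 + ‖y‖) ^ β * ‖emb (m+1) y - xo (m+1)‖ ^ (-s₁)) := by
      intro y
      have h1 := one_add_rpow_le' (norm_nonneg y) hβnn
      calc (1 + ‖y‖ ^ β) * u y ^ θ * ‖emb (m+1) y - xo (m+1)‖ ^ (-s₁)
          ≤ (2 * (1 + ‖y‖) ^ β) * u y ^ θ * ‖emb (m+1) y - xo (m+1)‖ ^ (-s₁) :=
            mul_le_mul_of_nonneg_right (mul_le_mul_of_nonneg_right h1
              (Real.rpow_pos_of_pos (hu0 y) θ).le) (hw₁pos y).le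
      _ = _ := by ring
    have h1 : (∫⁻ y : Eu m, ENNReal.ofReal
        ((1 + ‖y‖ ^ β) * u y ^ θ * ‖emb (m+1) y - xo (m+1)‖ ^ (-s₁)))
        ≤ ENNReal.ofReal 2 * ∫⁻ y : Eu m, ENNReal.ofReal
          (u y ^ θ * (1 + ‖y‖) ^ β * ‖emb (m+1) y - xo (m+1)‖ ^ (-s₁)) := by
      rw [← lint_ofReal_const_mul _ (by norm_num : (0:ℝ) ≤ 2)]
      exact lintegral_mono fun y => ENNReal.ofReal_le_ofReal (key y)
    exact ne_top_of_le_ne_top (ENNReal.mul_ne_top ENNReal.ofReal_ne_top hI₁') h1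
  · -- (I) half-space integral
    have key : ∀ x ∈ upperHalf (m+1),
        (1 + ‖x‖ ^ β) * v x ^ κ * ‖x - xo (m+1)‖ ^ (-s₂) ≤
        2 * (v x ^ κ * (1 + ‖x‖) ^ β * ‖x - xo (m+1)‖ ^ (-s₂)) := by
      intro x hx
      have h1 := one_add_rpow_le' (norm_nonneg x) hβnn
      have hwpos : (0:ℝ) < ‖x - xo (m+1)‖ ^ (-s₂) :=
        Real.rpow_pos_of_pos (by linarith [x_xo_ge_two hx]) _
      calc (1 + ‖x‖ ^ β) * v x ^ κ * ‖x - xo (m+1)‖ ^ (-s₂)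
          ≤ (2 * (1 + ‖x‖) ^ β) * v x ^ κ * ‖x - xo (m+1)‖ ^ (-s₂) :=
            mul_le_mul_of_nonneg_right (mul_le_mul_of_nonneg_right h1
              (Real.rpow_pos_of_pos (hv0 x hx) κ).le) hwpos.le
      _ = _ := by ring
    have h1 : (∫⁻ x in upperHalf (m+1), ENNReal.ofReal
        ((1 + ‖x‖ ^ β) * v x ^ κ * ‖x - xo (m+1)‖ ^ (-s₂)))
        ≤ ENNReal.ofReal 2 * ∫⁻ x in upperHalf (m+1), ENNReal.ofReal
          (v x ^ κ * (1 + ‖x‖) ^ β * ‖x - xo (m+1)‖ ^ (-s₂)) := by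
      rw [← lint_ofReal_const_mul _ (by norm_num : (0:ℝ) ≤ 2)]
      exact setLIntegral_mono' MU fun x hx => ENNReal.ofReal_le_ofReal (key x hx)
    exact ne_top_of_le_ne_top (ENNReal.mul_ne_top ENNReal.ofReal_ne_top hI₂') h1
  · -- (II) limit of u at infinity
    have hnt : Filter.Tendsto (fun y : Eu m => ‖y‖) (Filter.cocompact (Eu m)) Filter.atTop :=
      tendsto_norm_cocompact_atTop
    have hbig : ∀ᶠ y : Eu m in Filter.cocompact (Eu m), 1 ≤ ‖y‖ := hnt.eventually_ge_atTop 1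
    have hDCT : Filter.Tendsto (fun y : Eu m => ∫⁻ x in upperHalf (m+1),
        ENNReal.ofReal (v x ^ κ * (‖x - emb (m+1) y‖ / ‖y‖) ^ β * ‖x - xo (m+1)‖ ^ (-s₂)))
        (Filter.cocompact (Eu m))
        (nhds (∫⁻ x in upperHalf (m+1),
          ENNReal.ofReal (v x ^ κ * ‖x - xo (m+1)‖ ^ (-s₂)))) := by
      apply tendsto_lintegral_filter_of_dominated_convergence
        (fun x => ENNReal.ofReal (2 ^ β * (v x ^ κ * (1 + ‖x‖) ^ β * ‖x - xo (m+1)‖ ^ (-s₂))))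
      · refine Filter.Eventually.of_forall fun y => ?_
        exact ENNReal.measurable_ofReal.comp ((hMvκ.mul
          (((hMnorm (emb (m+1) y)).div_const ‖y‖).pow measurable_const)).mul hMw₂)
      · filter_upwards [hbig] with y hy
        refine (ae_restrict_mem MU).mono fun x hx => ?_
        apply ENNReal.ofReal_le_ofReal
        have hy0 : (0:ℝ) < ‖y‖ := lt_of_lt_of_le one_pos hy
        have hK : ‖x - emb (m+1) y‖ / ‖y‖ ≤ 2 * (1 + ‖x‖) := by
          rw [div_le_iff₀ hy0]
          calc ‖x - emb (m+1) y‖ ≤ (1 + ‖x‖) * (1 + ‖y‖) := x_emb_upper x y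
          _ ≤ (1 + ‖x‖) * (2 * ‖y‖) := by
              apply mul_le_mul_of_nonneg_left (by linarith) (by positivity)
          _ = 2 * (1 + ‖x‖) * ‖y‖ := by ring
        have hKβ : (‖x - emb (m+1) y‖ / ‖y‖) ^ β ≤ 2 ^ β * (1 + ‖x‖) ^ β := by
          rw [← Real.mul_rpow (by norm_num) (by positivity)]
          exact Real.rpow_le_rpow (by positivity) hK hβnn
        have hvnn : (0:ℝ) ≤ v x ^ κ := (Real.rpow_pos_of_pos (hv0 x hx) κ).le
        have hwnn : (0:ℝ) ≤ ‖x - xo (m+1)‖ ^ (-s₂) := Real.rpow_nonneg (norm_nonneg _) _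
        calc v x ^ κ * (‖x - emb (m+1) y‖ / ‖y‖) ^ β * ‖x - xo (m+1)‖ ^ (-s₂)
            ≤ v x ^ κ * (2 ^ β * (1 + ‖x‖) ^ β) * ‖x - xo (m+1)‖ ^ (-s₂) :=
              mul_le_mul_of_nonneg_right (mul_le_mul_of_nonneg_left hKβ hvnn) hwnn
        _ = _ := by ring
      · rw [lint_ofReal_const_mul _ (Real.rpow_nonneg (by norm_num : (0:ℝ) ≤ 2) β)]
        exact ENNReal.mul_ne_top ENNReal.ofReal_ne_top hI₂'
      · refine (ae_restrict_mem MU).mono fun x _ => ?_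
        have hr : Filter.Tendsto (fun y : Eu m => ‖x - emb (m+1) y‖ / ‖y‖)
            (Filter.cocompact (Eu m)) (nhds 1) := by
          have hq : Filter.Tendsto (fun y : Eu m => ‖x - emb (m+1) y‖ / ‖y‖ - 1)
              (Filter.cocompact (Eu m)) (nhds 0) := by
            have hbd : ∀ᶠ y : Eu m in Filter.cocompact (Eu m),
                ‖‖x - emb (m+1) y‖ / ‖y‖ - 1‖ ≤ ‖x‖ / ‖y‖ := by
              filter_upwards [hbig] with y hy
              have hy0 : (0:ℝ) < ‖y‖ := lt_of_lt_of_le one_pos hy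
              have h1 : |‖x - emb (m+1) y‖ - ‖y‖| ≤ ‖x‖ := by
                have h2 := abs_norm_sub_norm_le (x - emb (m+1) y) (-emb (m+1) y)
                rw [show x - emb (m+1) y - -emb (m+1) y = x by abel, norm_neg, norm_emb] at h2
                exact h2
              rw [show ‖x - emb (m+1) y‖ / ‖y‖ - 1 = (‖x - emb (m+1) y‖ - ‖y‖) / ‖y‖ by
                field_simp, norm_div, Real.norm_eq_abs, Real.norm_eq_abs, abs_of_pos hy0]
              gcongr
            have hgt : Filter.Tendsto (fun y : Eu m => ‖x‖ / ‖y‖)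
                (Filter.cocompact (Eu m)) (nhds 0) := by
              have h3 : Filter.Tendsto (fun y : Eu m => ‖x‖ * ‖y‖⁻¹)
                  (Filter.cocompact (Eu m)) (nhds (‖x‖ * 0)) :=
                (tendsto_inv_atTop_zero.comp hnt).const_mul ‖x‖
              simpa [div_eq_mul_inv] using h3
            exact squeeze_zero_norm' hbd hgt
          have h2 := hq.add (tendsto_const_nhds (x := (1:ℝ)))
          simpa using h2
        have hcont : ContinuousAt (fun sv : ℝ =>
            ENNReal.ofReal (v x ^ κ * sv ^ β * ‖x - xo (m+1)‖ ^ (-s₂))) 1 := by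
          apply ENNReal.continuous_ofReal.continuousAt.comp
          exact (continuousAt_const.mul (Real.continuousAt_rpow_const 1 β
            (Or.inl one_ne_zero))).mul continuousAt_const
        have h3 := hcont.tendsto.comp hr
        simpa [Real.one_rpow, Function.comp_def] using h3
    have h4 := (ENNReal.tendsto_toReal hAne).comp hDCT
    apply Filter.Tendsto.congr' ?_ h4
    filter_upwards [hbig] with y hy
    have hy0 : (0:ℝ) < ‖y‖ := lt_of_lt_of_le one_pos hy
    have hEq : (∫⁻ x in upperHalf (m+1),
        ENNReal.ofReal (v x ^ κ * (‖x - emb (m+1) y‖ / ‖y‖) ^ β * ‖x - xo (m+1)‖ ^ (-s₂)))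
        = ENNReal.ofReal (‖y‖ ^ (-β)) * ENNReal.ofReal (u y) := by
      rw [hu y, ← lint_ofReal_const_mul _ (Real.rpow_nonneg (norm_nonneg y) (-β))]
      apply lintegral_congr
      intro x
      congr 1
      rw [Real.div_rpow (norm_nonneg _) (norm_nonneg y), Real.rpow_neg (norm_nonneg y)]
      ring
    show ((∫⁻ x in upperHalf (m+1),
        ENNReal.ofReal (v x ^ κ * (‖x - emb (m+1) y‖ / ‖y‖) ^ β *
          ‖x - xo (m+1)‖ ^ (-s₂)))).toReal = ‖y‖ ^ (((m+1:ℕ):ℝ) - α) * u y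
    rw [hEq, ENNReal.toReal_mul, ENNReal.toReal_ofReal (Real.rpow_nonneg (norm_nonneg y) _),
      ENNReal.toReal_ofReal (hu0 y).le,
      show ((m+1:ℕ):ℝ) - α = -β by rw [hβdef]; ring]
  · -- (II) limit of v at infinity
    set l := (Filter.cocompact (Eu (m+1))) ⊓ Filter.principal (upperHalf (m+1)) with hldef
    have hnt' : Filter.Tendsto (fun x : Eu (m+1) => ‖x‖) l Filter.atTop :=
      Filter.Tendsto.mono_left tendsto_norm_cocompact_atTop inf_le_left
    have hbig : ∀ᶠ x : Eu (m+1) in l, 1 ≤ ‖x‖ := hnt'.eventually_ge_atTop 1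
    have hmem : ∀ᶠ x : Eu (m+1) in l, x ∈ upperHalf (m+1) := by
      rw [hldef]
      exact Filter.eventually_inf_principal.mpr (Filter.Eventually.of_forall fun x hx => hx)
    have hDCT : Filter.Tendsto (fun x : Eu (m+1) => ∫⁻ y : Eu m,
        ENNReal.ofReal (u y ^ θ * (‖x - emb (m+1) y‖ / ‖x‖) ^ β *
          ‖emb (m+1) y - xo (m+1)‖ ^ (-s₁))) l
        (nhds (∫⁻ y : Eu m,
          ENNReal.ofReal (u y ^ θ * ‖emb (m+1) y - xo (m+1)‖ ^ (-s₁)))) := by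
      apply tendsto_lintegral_filter_of_dominated_convergence
        (fun y => ENNReal.ofReal (2 ^ β *
          (u y ^ θ * (1 + ‖y‖) ^ β * ‖emb (m+1) y - xo (m+1)‖ ^ (-s₁))))
      · refine Filter.Eventually.of_forall fun x => ?_
        exact ENNReal.measurable_ofReal.comp ((hMuθ.mul
          ((((continuous_const.sub (continuous_emb m)).norm.measurable).div_const ‖x‖).pow
            measurable_const)).mul hMw₁)
      · filter_upwards [hbig] with x hx
        refine Filter.Eventually.of_forall fun y => ?_
        apply ENNReal.ofReal_le_ofReal
        have hx0 : (0:ℝ) < ‖x‖ := lt_of_lt_of_le one_pos hx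
        have hK : ‖x - emb (m+1) y‖ / ‖x‖ ≤ 2 * (1 + ‖y‖) := by
          rw [div_le_iff₀ hx0]
          calc ‖x - emb (m+1) y‖ ≤ (1 + ‖x‖) * (1 + ‖y‖) := x_emb_upper x y
          _ ≤ (2 * ‖x‖) * (1 + ‖y‖) := by
              apply mul_le_mul_of_nonneg_right (by linarith) (by positivity)
          _ = 2 * (1 + ‖y‖) * ‖x‖ := by ring
        have hKβ : (‖x - emb (m+1) y‖ / ‖x‖) ^ β ≤ 2 ^ β * (1 + ‖y‖) ^ β := by
          rw [← Real.mul_rpow (by norm_num) (by positivity)]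
          exact Real.rpow_le_rpow (by positivity) hK hβnn
        have hunn : (0:ℝ) ≤ u y ^ θ := (Real.rpow_pos_of_pos (hu0 y) θ).le
        calc u y ^ θ * (‖x - emb (m+1) y‖ / ‖x‖) ^ β * ‖emb (m+1) y - xo (m+1)‖ ^ (-s₁)
            ≤ u y ^ θ * (2 ^ β * (1 + ‖y‖) ^ β) * ‖emb (m+1) y - xo (m+1)‖ ^ (-s₁) :=
              mul_le_mul_of_nonneg_right (mul_le_mul_of_nonneg_left hKβ hunn) (hw₁pos y).le
        _ = _ := by ring
      · rw [lint_ofReal_const_mul _ (Real.rpow_nonneg (by norm_num : (0:ℝ) ≤ 2) β)]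
        exact ENNReal.mul_ne_top ENNReal.ofReal_ne_top hI₁'
      · refine Filter.Eventually.of_forall fun y => ?_
        have hr : Filter.Tendsto (fun x : Eu (m+1) => ‖x - emb (m+1) y‖ / ‖x‖) l (nhds 1) := by
          have hq : Filter.Tendsto (fun x : Eu (m+1) => ‖x - emb (m+1) y‖ / ‖x‖ - 1) l
              (nhds 0) := by
            have hbd : ∀ᶠ x : Eu (m+1) in l,
                ‖‖x - emb (m+1) y‖ / ‖x‖ - 1‖ ≤ ‖y‖ / ‖x‖ := by
              filter_upwards [hbig] with x hx
              have hx0 : (0:ℝ) < ‖x‖ := lt_of_lt_of_le one_pos hx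
              have h1 : |‖x - emb (m+1) y‖ - ‖x‖| ≤ ‖y‖ := by
                have h2 := abs_norm_sub_norm_le (x - emb (m+1) y) x
                rw [show x - emb (m+1) y - x = -emb (m+1) y by abel, norm_neg, norm_emb] at h2
                exact h2
              rw [show ‖x - emb (m+1) y‖ / ‖x‖ - 1 = (‖x - emb (m+1) y‖ - ‖x‖) / ‖x‖ by
                field_simp, norm_div, Real.norm_eq_abs, Real.norm_eq_abs, abs_of_pos hx0]
              gcongr
            have hgt : Filter.Tendsto (fun x : Eu (m+1) => ‖y‖ / ‖x‖) l (nhds 0) := by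
              have h3 : Filter.Tendsto (fun x : Eu (m+1) => ‖y‖ * ‖x‖⁻¹) l
                  (nhds (‖y‖ * 0)) := (tendsto_inv_atTop_zero.comp hnt').const_mul ‖y‖
              simpa [div_eq_mul_inv] using h3
            exact squeeze_zero_norm' hbd hgt
          have h2 := hq.add (tendsto_const_nhds (x := (1:ℝ)))
          simpa using h2
        have hcont : ContinuousAt (fun sv : ℝ =>
            ENNReal.ofReal (u y ^ θ * sv ^ β * ‖emb (m+1) y - xo (m+1)‖ ^ (-s₁))) 1 := by
          apply ENNReal.continuous_ofReal.continuousAt.comp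
          exact (continuousAt_const.mul (Real.continuousAt_rpow_const 1 β
            (Or.inl one_ne_zero))).mul continuousAt_const
        have h3 := hcont.tendsto.comp hr
        simpa [Real.one_rpow, Function.comp_def] using h3
    have h4 := (ENNReal.tendsto_toReal hBne).comp hDCT
    apply Filter.Tendsto.congr' ?_ h4
    filter_upwards [hbig, hmem] with x hx hxU
    have hx0 : (0:ℝ) < ‖x‖ := lt_of_lt_of_le one_pos hx
    have hEq : (∫⁻ y : Eu m,
        ENNReal.ofReal (u y ^ θ * (‖x - emb (m+1) y‖ / ‖x‖) ^ β *
          ‖emb (m+1) y - xo (m+1)‖ ^ (-s₁)))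
        = ENNReal.ofReal (‖x‖ ^ (-β)) * ENNReal.ofReal (v x) := by
      rw [hv x hxU, ← lint_ofReal_const_mul _ (Real.rpow_nonneg (norm_nonneg x) (-β))]
      apply lintegral_congr
      intro y
      congr 1
      rw [Real.div_rpow (norm_nonneg _) (norm_nonneg x), Real.rpow_neg (norm_nonneg x)]
      ring
    show ((∫⁻ y : Eu m,
        ENNReal.ofReal (u y ^ θ * (‖x - emb (m+1) y‖ / ‖x‖) ^ β *
          ‖emb (m+1) y - xo (m+1)‖ ^ (-s₁)))).toReal = ‖x‖ ^ (((m+1:ℕ):ℝ) - α) * v x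
    rw [hEq, ENNReal.toReal_mul, ENNReal.toReal_ofReal (Real.rpow_nonneg (norm_nonneg x) _),
      ENNReal.toReal_ofReal (hv0 x hxU).le,
      show ((m+1:ℕ):ℝ) - α = -β by rw [hβdef]; ring]
  · -- (III) for u
    refine ⟨max (2 / cl) ((∫⁻ x in upperHalf (m+1), ENNReal.ofReal
        (v x ^ κ * (1 + ‖x‖) ^ β * ‖x - xo (m+1)‖ ^ (-s₂))).toReal * 2 ^ β + 1),
      lt_of_lt_of_le (div_pos two_pos hclpos) (le_max_left _ _), fun y => ?_⟩
    have hC₁pos : (0:ℝ) < max (2 / cl) ((∫⁻ x in upperHalf (m+1), ENNReal.ofReal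
        (v x ^ κ * (1 + ‖x‖) ^ β * ‖x - xo (m+1)‖ ^ (-s₂))).toReal * 2 ^ β + 1) :=
      lt_of_lt_of_le (div_pos two_pos hclpos) (le_max_left _ _)
    constructor
    · rw [div_le_iff₀ hC₁pos]
      have h1 := one_add_rpow_le' (norm_nonneg y) hβnn
      have h2 : (2/cl) * (cl * (1 + ‖y‖) ^ β) ≤ (2/cl) * u y :=
        mul_le_mul_of_nonneg_left (hulow' y) (by positivity)
      have h3 : (2/cl) * (cl * (1 + ‖y‖) ^ β) = 2 * (1 + ‖y‖) ^ β := by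
        field_simp
      have h4 : (2/cl) * u y ≤ (max (2 / cl) ((∫⁻ x in upperHalf (m+1), ENNReal.ofReal
          (v x ^ κ * (1 + ‖x‖) ^ β * ‖x - xo (m+1)‖ ^ (-s₂))).toReal * 2 ^ β + 1)) * u y :=
        mul_le_mul_of_nonneg_right (le_max_left _ _) (hu0 y).le
      calc 1 + ‖y‖ ^ β ≤ 2 * (1 + ‖y‖) ^ β := h1
      _ = (2/cl) * (cl * (1 + ‖y‖) ^ β) := h3.symm
      _ ≤ (2/cl) * u y := h2
      _ ≤ _ := h4
      _ = _ := mul_comm _ _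
    · have h1 := huup y
      have h2 := rpow_one_add_le' (norm_nonneg y) hβnn
      have hInn : (0:ℝ) ≤ (∫⁻ x in upperHalf (m+1), ENNReal.ofReal
          (v x ^ κ * (1 + ‖x‖) ^ β * ‖x - xo (m+1)‖ ^ (-s₂))).toReal := ENNReal.toReal_nonneg
      have h5 : (0:ℝ) ≤ 1 + ‖y‖ ^ β := by positivity
      calc u y ≤ (∫⁻ x in upperHalf (m+1), ENNReal.ofReal
          (v x ^ κ * (1 + ‖x‖) ^ β * ‖x - xo (m+1)‖ ^ (-s₂))).toReal * (1 + ‖y‖) ^ β := h1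
      _ ≤ (∫⁻ x in upperHalf (m+1), ENNReal.ofReal
          (v x ^ κ * (1 + ‖x‖) ^ β * ‖x - xo (m+1)‖ ^ (-s₂))).toReal *
          (2 ^ β * (1 + ‖y‖ ^ β)) := mul_le_mul_of_nonneg_left h2 hInn
      _ = ((∫⁻ x in upperHalf (m+1), ENNReal.ofReal
          (v x ^ κ * (1 + ‖x‖) ^ β * ‖x - xo (m+1)‖ ^ (-s₂))).toReal * 2 ^ β) *
          (1 + ‖y‖ ^ β) := by ring
      _ ≤ _ := by
          apply mul_le_mul_of_nonneg_right _ h5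
          exact le_trans (le_add_of_nonneg_right one_pos.le) (le_max_right _ _)
  · -- (III) for v
    refine ⟨max (2 / cv) ((∫⁻ y : Eu m, ENNReal.ofReal
        (u y ^ θ * (1 + ‖y‖) ^ β * ‖emb (m+1) y - xo (m+1)‖ ^ (-s₁))).toReal * 2 ^ β + 1),
      lt_of_lt_of_le (div_pos two_pos hcvpos) (le_max_left _ _), fun x hx => ?_⟩
    have hC₂pos : (0:ℝ) < max (2 / cv) ((∫⁻ y : Eu m, ENNReal.ofReal
        (u y ^ θ * (1 + ‖y‖) ^ β * ‖emb (m+1) y - xo (m+1)‖ ^ (-s₁))).toReal * 2 ^ β + 1) :=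
      lt_of_lt_of_le (div_pos two_pos hcvpos) (le_max_left _ _)
    constructor
    · rw [div_le_iff₀ hC₂pos]
      have h1 := one_add_rpow_le' (norm_nonneg x) hβnn
      have h2 : (2/cv) * (cv * (1 + ‖x‖) ^ β) ≤ (2/cv) * v x :=
        mul_le_mul_of_nonneg_left (hvlow x hx) (by positivity)
      have h3 : (2/cv) * (cv * (1 + ‖x‖) ^ β) = 2 * (1 + ‖x‖) ^ β := by
        field_simp
      have h4 : (2/cv) * v x ≤ (max (2 / cv) ((∫⁻ y : Eu m, ENNReal.ofReal
          (u y ^ θ * (1 + ‖y‖) ^ β * ‖emb (m+1) y - xo (m+1)‖ ^ (-s₁))).toReal * 2 ^ β + 1)) *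
          v x := mul_le_mul_of_nonneg_right (le_max_left _ _) (hv0 x hx).le
      calc 1 + ‖x‖ ^ β ≤ 2 * (1 + ‖x‖) ^ β := h1
      _ = (2/cv) * (cv * (1 + ‖x‖) ^ β) := h3.symm
      _ ≤ (2/cv) * v x := h2
      _ ≤ _ := h4
      _ = _ := mul_comm _ _
    · have h1 := hvup x hx
      have h2 := rpow_one_add_le' (norm_nonneg x) hβnn
      have hInn : (0:ℝ) ≤ (∫⁻ y : Eu m, ENNReal.ofReal
          (u y ^ θ * (1 + ‖y‖) ^ β * ‖emb (m+1) y - xo (m+1)‖ ^ (-s₁))).toReal :=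
        ENNReal.toReal_nonneg
      have h5 : (0:ℝ) ≤ 1 + ‖x‖ ^ β := by positivity
      calc v x ≤ (∫⁻ y : Eu m, ENNReal.ofReal
          (u y ^ θ * (1 + ‖y‖) ^ β * ‖emb (m+1) y - xo (m+1)‖ ^ (-s₁))).toReal *
          (1 + ‖x‖) ^ β := h1
      _ ≤ (∫⁻ y : Eu m, ENNReal.ofReal
          (u y ^ θ * (1 + ‖y‖) ^ β * ‖emb (m+1) y - xo (m+1)‖ ^ (-s₁))).toReal *
          (2 ^ β * (1 + ‖x‖ ^ β)) := mul_le_mul_of_nonneg_left h2 hInn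
      _ = ((∫⁻ y : Eu m, ENNReal.ofReal
          (u y ^ θ * (1 + ‖y‖) ^ β * ‖emb (m+1) y - xo (m+1)‖ ^ (-s₁))).toReal * 2 ^ β) *
          (1 + ‖x‖ ^ β) := by ring
      _ ≤ _ := by
          apply mul_le_mul_of_nonneg_right _ h5
          exact le_trans (le_add_of_nonneg_right one_pos.le) (le_max_right _ _)
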